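/- Let μ be the Haar measure on (ℚ_p,+) normalized so that μ(ℤ_p) = 1, and let ψ be an additive character of ℚ_p that is trivial on ℤ_p and nontrivial on p⁻¹ℤ_p. Let f : ℚ_p → ℂ be locally constant with compact support, and define its Fourier transform by f̂(y) = ∫_{ℚ_p} f(x)·ψ(−xy) dμ(x). Then f̂ is again locally constant with compact support, and the Fourier inversion formula holds: f(x) = ∫_{ℚ_p} f̂(y)·ψ(xy) dμ(y) for every x ∈ ℚ_p. -/

import Mathlib

open MeasureTheory

noncomputable section

variable (p : ℕ) [Fact p.Prime]

instance : MeasurableSpace ℚ_[p] := borel _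
instance : BorelSpace ℚ_[p] := ⟨rfl⟩

namespace St14
variable {p}

def pb (p : ℕ) [Fact p.Prime] (n : ℤ) : Set ℚ_[p] := {x | ‖x‖ ≤ (p : ℝ) ^ n}

lemma one_lt_P : (1:ℝ) < (p:ℝ) := by exact_mod_cast (Fact.out : p.Prime).one_lt

lemma P_pos : (0:ℝ) < (p:ℝ) := lt_trans one_pos one_lt_P

lemma mem_pb {n : ℤ} {x : ℚ_[p]} : x ∈ pb p n ↔ ‖x‖ ≤ (p : ℝ) ^ n := Iff.rfl

lemma pb_eq_closedBall (n : ℤ) : pb p n = Metric.closedBall 0 ((p:ℝ)^n) := by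
  ext x; simp [pb, Metric.mem_closedBall, dist_zero_right]

lemma pb_isClosed (n : ℤ) : IsClosed (pb p n) := by
  rw [pb_eq_closedBall]; exact Metric.isClosed_closedBall

lemma pb_isOpen (n : ℤ) : IsOpen (pb p n) := by
  rw [pb_eq_closedBall]
  exact IsUltrametricDist.isOpen_closedBall _ (ne_of_gt (zpow_pos P_pos n))

lemma pb_isCompact (n : ℤ) : IsCompact (pb p n) := by
  rw [pb_eq_closedBall]; exact isCompact_closedBall _ _

lemma pb_measurable (n : ℤ) : MeasurableSet (pb p n) := (pb_isClosed n).measurableSet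

lemma pb_add {n : ℤ} {x y : ℚ_[p]} (hx : x ∈ pb p n) (hy : y ∈ pb p n) :
    x + y ∈ pb p n := le_trans (Padic.nonarchimedean x y) (max_le hx hy)

lemma pb_neg {n : ℤ} {x : ℚ_[p]} (hx : x ∈ pb p n) : -x ∈ pb p n := by
  simpa [mem_pb] using hx

lemma pb_mono {m n : ℤ} (h : m ≤ n) : pb p m ⊆ pb p n := fun x hx =>
  le_trans hx (zpow_le_zpow_right₀ (le_of_lt one_lt_P) h)

lemma norm_pi (n : ℤ) : ‖((p:ℚ_[p]) ^ (-n) : ℚ_[p])‖ = (p:ℝ)^n := by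
  rw [norm_zpow, Padic.norm_p]
  rw [← zpow_neg_one, ← zpow_mul]
  ring_nf


/-- coset representative decomposition -/
lemma pb_decomp {n : ℤ} {x : ℚ_[p]} (hx : x ∈ pb p n) :
    ∃ j : ℕ, j < p ∧ x - (j : ℚ_[p]) * (p:ℚ_[p])^(-n) ∈ pb p (n-1) := by
  have hp0 : (p:ℚ_[p]) ≠ 0 := by
    exact_mod_cast (Nat.Prime.ne_zero (Fact.out : p.Prime))
  set u : ℚ_[p] := x * (p:ℚ_[p])^n with hu_def
  have hu : ‖u‖ ≤ 1 := by
    rw [hu_def, norm_mul]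
    have : ‖((p:ℚ_[p])^n : ℚ_[p])‖ = (p:ℝ)^(-n) := by
      simpa using norm_pi (p := p) (-n)
    rw [this]
    calc ‖x‖ * (p:ℝ)^(-n) ≤ (p:ℝ)^n * (p:ℝ)^(-n) :=
          mul_le_mul_of_nonneg_right hx (le_of_lt (zpow_pos P_pos _))
      _ = 1 := by rw [← zpow_add₀ (ne_of_gt P_pos)]; simp
  set U : ℤ_[p] := ⟨u, hu⟩
  refine ⟨U.appr 1, by simpa using U.appr_lt 1, ?_⟩
  have h2 : ‖U - (U.appr 1 : ℤ_[p])‖ ≤ (p:ℝ)^(-(1:ℕ) : ℤ) := by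
    rw [PadicInt.norm_le_pow_iff_mem_span_pow]
    simpa using U.appr_spec 1
  have h3 : ‖u - ((U.appr 1 : ℕ) : ℚ_[p])‖ ≤ (p:ℝ)^(-1:ℤ) := by
    have h4 : ((U - (U.appr 1 : ℤ_[p]) : ℤ_[p]) : ℚ_[p]) = u - ((U.appr 1 : ℕ) : ℚ_[p]) := by
      push_cast; rfl
    rw [← h4, ← PadicInt.norm_def]
    exact_mod_cast h2
  have hx_eq : x - (U.appr 1 : ℚ_[p]) * (p:ℚ_[p])^(-n)
      = (u - (U.appr 1 : ℚ_[p])) * (p:ℚ_[p])^(-n) := by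
    have hz : ((p:ℚ_[p])^n) ≠ 0 := zpow_ne_zero _ hp0
    rw [hu_def, zpow_neg, sub_mul, mul_assoc, mul_inv_cancel₀ hz, mul_one]
  rw [mem_pb, hx_eq, norm_mul, norm_pi]
  calc ‖u - (U.appr 1 : ℚ_[p])‖ * (p:ℝ)^n ≤ (p:ℝ)^(-1:ℤ) * (p:ℝ)^n :=
        mul_le_mul_of_nonneg_right h3 (le_of_lt (zpow_pos P_pos _))
    _ = (p:ℝ)^(n-1) := by rw [← zpow_add₀ (ne_of_gt P_pos)]; ring_nf

/-- the coset -/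
def cs (p : ℕ) [Fact p.Prime] (n : ℤ) (j : Fin p) : Set ℚ_[p] :=
  (fun x => x - (j : ℚ_[p]) * (p:ℚ_[p])^(-n)) ⁻¹' pb p (n-1)

lemma pb_eq_iUnion (n : ℤ) : pb p n = ⋃ j : Fin p, cs p n j := by
  ext x
  constructor
  · intro hx
    obtain ⟨j, hj, hmem⟩ := pb_decomp hx
    refine Set.mem_iUnion.2 ⟨⟨j, hj⟩, ?_⟩
    simpa [cs] using hmem
  · intro hx
    obtain ⟨j, hj⟩ := Set.mem_iUnion.1 hx
    have h1 : x - (j : ℚ_[p]) * (p:ℚ_[p])^(-n) ∈ pb p (n-1) := hj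
    have h2 : (j : ℚ_[p]) * (p:ℚ_[p])^(-n) ∈ pb p n := by
      rw [mem_pb, norm_mul, norm_pi]
      calc ‖((j:ℕ) : ℚ_[p])‖ * (p:ℝ)^n ≤ 1 * (p:ℝ)^n := by
            have : ‖(((j:ℕ):ℤ) : ℚ_[p])‖ ≤ 1 := Padic.norm_int_le_one _
            push_cast at this
            exact mul_le_mul_of_nonneg_right this (le_of_lt (zpow_pos P_pos _))
        _ = (p:ℝ)^n := one_mul _
    have := pb_add (pb_mono (by omega) h1) h2
    simpa using this

lemma cs_disjoint (n : ℤ) : Pairwise (Function.onFun Disjoint (cs p n)) := by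
  intro j k hjk
  rw [Function.onFun, Set.disjoint_left]
  intro x hxj hxk
  have h1 : x - (j : ℚ_[p]) * (p:ℚ_[p])^(-n) ∈ pb p (n-1) := hxj
  have h2 : x - (k : ℚ_[p]) * (p:ℚ_[p])^(-n) ∈ pb p (n-1) := hxk
  have h3 : ((k : ℚ_[p]) - (j : ℚ_[p])) * (p:ℚ_[p])^(-n) ∈ pb p (n-1) := by
    have h := pb_add h1 (pb_neg h2)
    have key : (x - (j : ℚ_[p]) * (p:ℚ_[p])^(-n)) + -(x - (k : ℚ_[p]) * (p:ℚ_[p])^(-n))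
        = ((k : ℚ_[p]) - (j : ℚ_[p])) * (p:ℚ_[p])^(-n) := by ring
    rwa [key] at h
  have hnorm : ‖((k : ℚ_[p]) - (j : ℚ_[p]))‖ = 1 := by
    have hne : ¬ ((p:ℤ) ∣ ((k:ℕ):ℤ) - ((j:ℕ):ℤ)) := by
      intro hdvd
      have hk := k.isLt; have hj := j.isLt
      have habs : |((k:ℕ):ℤ) - ((j:ℕ):ℤ)| < (p:ℤ) := by rw [abs_lt]; omega
      have : ((k:ℕ):ℤ) - ((j:ℕ):ℤ) = 0 := Int.eq_zero_of_abs_lt_dvd hdvd habs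
      have : (k:ℕ) = (j:ℕ) := by omega
      exact hjk (Fin.ext this.symm)
    have hlt := (Padic.norm_intCast_lt_one_iff (p := p) (k := ((k:ℕ):ℤ) - ((j:ℕ):ℤ))).not.2 hne
    have hle : ‖((((k:ℕ):ℤ) - ((j:ℕ):ℤ) : ℤ) : ℚ_[p])‖ ≤ 1 := Padic.norm_int_le_one _
    have heq : ((((k:ℕ):ℤ) - ((j:ℕ):ℤ) : ℤ) : ℚ_[p]) = (k : ℚ_[p]) - (j : ℚ_[p]) := by push_cast; ring
    rw [heq] at hlt hle
    exact le_antisymm hle (not_lt.1 hlt)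
  have : ‖((k : ℚ_[p]) - (j : ℚ_[p])) * (p:ℚ_[p])^(-n)‖ = (p:ℝ)^n := by
    rw [norm_mul, hnorm, norm_pi, one_mul]
  rw [mem_pb, this] at h3
  have : (p:ℝ)^n ≤ (p:ℝ)^(n-1) := h3
  have hlt : (p:ℝ)^(n-1) < (p:ℝ)^n := zpow_lt_zpow_right₀ one_lt_P (by omega)
  linarith

lemma cs_measurable (n : ℤ) (j : Fin p) : MeasurableSet (cs p n j) := by
  apply MeasurableSet.preimage (pb_measurable _)
  exact (continuous_id.sub continuous_const).measurable

lemma meas_cs (μ : Measure ℚ_[p]) [μ.IsAddHaarMeasure] (n : ℤ) (j : Fin p) :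
    μ (cs p n j) = μ (pb p (n-1)) := by
  have : cs p n j = (fun x => (-( (j : ℚ_[p]) * (p:ℚ_[p])^(-n))) + x) ⁻¹' pb p (n-1) := by
    ext x; simp [cs, sub_eq_neg_add, add_comm]
  rw [this, measure_preimage_add]

lemma meas_pb_succ (μ : Measure ℚ_[p]) [μ.IsAddHaarMeasure] (n : ℤ) :
    μ (pb p n) = p * μ (pb p (n-1)) := by
  rw [pb_eq_iUnion n, measure_iUnion (cs_disjoint n) (cs_measurable n)]
  simp [meas_cs]

lemma meas_pb (μ : Measure ℚ_[p]) [μ.IsAddHaarMeasure]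
    (hμ : μ {x : ℚ_[p] | ‖x‖ ≤ 1} = 1) (n : ℤ) :
    μ (pb p n) = (p : ENNReal) ^ n := by
  have hp0 : (p : ENNReal) ≠ 0 := by
    exact_mod_cast (Nat.Prime.ne_zero (Fact.out : p.Prime))
  have hptop : (p : ENNReal) ≠ ⊤ := ENNReal.natCast_ne_top p
  have base : μ (pb p 0) = 1 := by
    rw [show pb p (0:ℤ) = {x : ℚ_[p] | ‖x‖ ≤ 1} by ext x; simp [mem_pb]]
    exact hμ
  induction n using Int.induction_on with
  | zero => simpa using base
  | succ k ih =>
      have := meas_pb_succ μ (k+1)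
      simp only [add_sub_cancel_right] at this
      rw [this, ih, show ((k:ℤ)+1 : ℤ) = 1 + (k:ℤ) by ring,
        ENNReal.zpow_add hp0 hptop, zpow_one]
  | pred k ih =>
      have := meas_pb_succ μ (-k)
      rw [ih] at this
      have cancel : ∀ A B : ENNReal, (p:ENNReal) * A = (p:ENNReal) * B → A = B := by
        intro A B h
        have h2 := congrArg (fun t => (p:ENNReal)⁻¹ * t) h
        simpa [← mul_assoc, ENNReal.inv_mul_cancel hp0 hptop] using h2
      have aux : (p:ENNReal)^(-(k:ℤ)) = (p:ENNReal) * (p:ENNReal)^(-(k:ℤ)-1) := by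
        conv_lhs => rw [show (-(k:ℤ)) = 1 + (-(k:ℤ)-1) by ring]
        rw [ENNReal.zpow_add hp0 hptop, zpow_one]
      have hstep : (p:ENNReal) * μ (pb p (-(k:ℤ)-1)) = (p:ENNReal) * (p:ENNReal)^(-(k:ℤ)-1) := by
        rw [← this]; exact aux
      have hfin := cancel _ _ hstep
      simpa [show (-(k:ℤ)-1) = (-((k:ℤ)+1)) by ring] using hfin


lemma toReal_zpow' (a : ENNReal) (n : ℤ) : (a ^ n).toReal = a.toReal ^ n := by
  rcases n with m | m
  · simp
  · simp [zpow_negSucc, ENNReal.toReal_inv]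

lemma norm_ge_of_not_le {y : ℚ_[p]} {n : ℤ} (h : ¬ ‖y‖ ≤ (p:ℝ)^n) : (p:ℝ)^(n+1) ≤ ‖y‖ := by
  have h2 := (Padic.norm_le_pow_iff_norm_lt_pow_add_one y n).not.1 h
  push_neg at h2
  exact h2

lemma psi_cont (ψ : AddChar ℚ_[p] ℂ) (hψtriv : ∀ x : ℚ_[p], ‖x‖ ≤ 1 → ψ x = 1) :
    Continuous ψ := by
  apply IsLocallyConstant.continuous
  rw [IsLocallyConstant.iff_exists_open]
  intro x
  refine ⟨Metric.closedBall x 1, IsUltrametricDist.isOpen_closedBall _ one_ne_zero,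
    Metric.mem_closedBall_self zero_le_one, ?_⟩
  intro x' hx'
  have h1 : ψ x' = ψ x * ψ (x' - x) := by
    rw [← AddChar.map_add_eq_mul]; congr 1; ring
  rw [h1, hψtriv (x' - x) (by simpa [dist_eq_norm] using Metric.mem_closedBall.1 hx'), mul_one]

lemma exists_u (ψ : AddChar ℚ_[p] ℂ)
    (hψtriv : ∀ x : ℚ_[p], ‖x‖ ≤ 1 → ψ x = 1)
    (hψnontriv : ∃ x : ℚ_[p], ‖x‖ ≤ (p : ℝ) ∧ ψ x ≠ 1)
    {n : ℤ} {y : ℚ_[p]} (hy : ¬ ‖y‖ ≤ (p:ℝ)^n) :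
    ∃ u : ℚ_[p], ‖u‖ ≤ (p:ℝ)^(-n) ∧ ψ (u * y) ≠ 1 := by
  obtain ⟨x₀, hx₀le, hx₀ne⟩ := hψnontriv
  have hylb : (p:ℝ)^(n+1) ≤ ‖y‖ := norm_ge_of_not_le hy
  have hy0 : y ≠ 0 := by
    intro h
    rw [h, norm_zero] at hylb
    nlinarith [zpow_pos (P_pos (p := p)) (n+1)]
  refine ⟨x₀ * y⁻¹, ?_, ?_⟩
  · rw [norm_mul, norm_inv]
    have h1 : ‖y‖⁻¹ ≤ ((p:ℝ)^(n+1))⁻¹ :=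
      inv_anti₀ (zpow_pos P_pos _) hylb
    calc ‖x₀‖ * ‖y‖⁻¹ ≤ (p:ℝ) * ((p:ℝ)^(n+1))⁻¹ :=
          mul_le_mul hx₀le h1 (by positivity) (le_of_lt P_pos)
      _ = (p:ℝ)^(-n) := by
          rw [← zpow_neg, show (-n) = 1 + -(n+1) by ring,
            zpow_add₀ (ne_of_gt P_pos), zpow_one]
  · rwa [mul_assoc, inv_mul_cancel₀ hy0, mul_one]


lemma int_ball (μ : Measure ℚ_[p]) [μ.IsAddHaarMeasure]
    (hμ : μ {x : ℚ_[p] | ‖x‖ ≤ 1} = 1)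
    (ψ : AddChar ℚ_[p] ℂ)
    (hψtriv : ∀ x : ℚ_[p], ‖x‖ ≤ 1 → ψ x = 1)
    (hψnontriv : ∃ x : ℚ_[p], ‖x‖ ≤ (p : ℝ) ∧ ψ x ≠ 1)
    (n : ℤ) (y : ℚ_[p]) :
    ∫ x in pb p n, (ψ (x * y) : ℂ) ∂μ
      = if ‖y‖ ≤ (p:ℝ)^(-n) then ((((p:ℝ)^n : ℝ) : ℂ)) else 0 := by
  split_ifs with h
  · have hcongr : ∀ x ∈ pb p n, (ψ (x * y) : ℂ) = 1 := by
      intro x hx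
      apply hψtriv
      rw [norm_mul]
      calc ‖x‖ * ‖y‖ ≤ (p:ℝ)^n * (p:ℝ)^(-n) :=
            mul_le_mul hx h (norm_nonneg _) (le_of_lt (zpow_pos P_pos _))
        _ = 1 := by rw [← zpow_add₀ (ne_of_gt P_pos)]; simp
    rw [setIntegral_congr_fun (pb_measurable n) hcongr, setIntegral_const, measureReal_def,
      meas_pb μ hμ n, toReal_zpow']
    simp [Complex.real_smul]
  · obtain ⟨u, hu, hune⟩ := exists_u ψ hψtriv hψnontriv (n := -n) h
    rw [neg_neg] at hu
    have hu' : u ∈ pb p n := hu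
    set g : ℚ_[p] → ℂ := (pb p n).indicator fun x => (ψ (x * y) : ℂ) with hg
    have hpt : ∀ x, g (x + u) = ψ (u * y) * g x := by
      intro x
      by_cases hx : x ∈ pb p n
      · have hxu : x + u ∈ pb p n := pb_add hx hu'
        rw [hg]
        rw [Set.indicator_of_mem hxu, Set.indicator_of_mem hx,
          show (x + u) * y = u * y + x * y by ring, AddChar.map_add_eq_mul]
      · have hxu : x + u ∉ pb p n := by
          intro hc
          exact hx (by simpa using pb_add hc (pb_neg hu'))
        rw [hg, Set.indicator_of_notMem hxu, Set.indicator_of_notMem hx, mul_zero]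
    have htrans : ∫ x, g (x + u) ∂μ = ∫ x, g x ∂μ :=
      integral_add_right_eq_self g u
    have hkey : (ψ (u * y) : ℂ) * ∫ x, g x ∂μ = ∫ x, g x ∂μ := by
      rw [← integral_const_mul, ← htrans]
      exact (integral_congr_ae (Filter.Eventually.of_forall fun x => hpt x)).symm
    have h0 : ((ψ (u * y) : ℂ) - 1) * ∫ x, g x ∂μ = 0 := by
      rw [sub_mul, hkey, one_mul, sub_self]
    rcases mul_eq_zero.1 h0 with hc | hc
    · exact absurd (sub_eq_zero.1 hc) hune
    · rw [← integral_indicator (pb_measurable n)]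
      exact hc


lemma unif {f : ℚ_[p] → ℂ} (hf1 : IsLocallyConstant f) (hf2 : HasCompactSupport f) :
    ∃ N : ℕ, (∀ x u : ℚ_[p], ‖u‖ ≤ (p:ℝ)^(-(N:ℤ)) → f (x + u) = f x) ∧
      tsupport f ⊆ pb p (N:ℤ) := by
  have hUc := (IsLocallyConstant.iff_exists_open f).1 hf1
  choose U hUopen hUmem hUconst using hUc
  have hball : ∀ x : ℚ_[p], ∃ k : ℕ, Metric.closedBall x ((p:ℝ)^(-(k:ℤ))) ⊆ U x := by
    intro x
    obtain ⟨ε, hε, hsub⟩ := Metric.isOpen_iff.1 (hUopen x) x (hUmem x)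
    obtain ⟨k, hk⟩ := pow_unbounded_of_one_lt ε⁻¹ (one_lt_P (p := p))
    refine ⟨k, le_trans (Metric.closedBall_subset_ball ?_) hsub⟩
    rw [zpow_neg, zpow_natCast]
    exact inv_lt_of_inv_lt₀ hε hk
  choose k hk using hball
  -- finite subcover of the support by the closed balls V x
  have hVopen : ∀ x : ℚ_[p], IsOpen (Metric.closedBall x ((p:ℝ)^(-(k x:ℤ)))) := fun x =>
    IsUltrametricDist.isOpen_closedBall _ (ne_of_gt (zpow_pos P_pos _))
  have hcover : tsupport f ⊆ ⋃ x : ℚ_[p], Metric.closedBall x ((p:ℝ)^(-(k x:ℤ))) := by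
    intro z _
    exact Set.mem_iUnion.2 ⟨z, Metric.mem_closedBall_self (le_of_lt (zpow_pos P_pos _))⟩
  obtain ⟨t, ht⟩ := hf2.elim_finite_subcover _ hVopen hcover
  -- bound for the support
  obtain ⟨r, hr⟩ := hf2.isBounded.subset_closedBall 0
  obtain ⟨m, hm⟩ := pow_unbounded_of_one_lt r (one_lt_P (p := p))
  set N : ℕ := (t.sup k) ⊔ m with hN
  refine ⟨N, ?_, ?_⟩
  · -- local constancy at scale p^(-N)
    have hδle : ∀ i ∈ t, (p:ℝ)^(-(N:ℤ)) ≤ (p:ℝ)^(-(k i:ℤ)) := by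
      intro i hi
      apply zpow_le_zpow_right₀ (le_of_lt one_lt_P)
      have : k i ≤ N := le_trans (Finset.le_sup hi) le_sup_left
      omega
    have hstep : ∀ i ∈ t, ∀ z ∈ Metric.closedBall i ((p:ℝ)^(-(k i:ℤ))),
        ∀ w : ℚ_[p], ‖w‖ ≤ (p:ℝ)^(-(N:ℤ)) → z + w ∈ Metric.closedBall i ((p:ℝ)^(-(k i:ℤ))) := by
      intro i hi z hz w hw
      rw [Metric.mem_closedBall]
      calc dist (z + w) i ≤ max (dist (z + w) z) (dist z i) :=
            IsUltrametricDist.dist_triangle_max _ _ _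
        _ ≤ (p:ℝ)^(-(k i:ℤ)) := by
            apply max_le
            · rw [show dist (z + w) z = ‖w‖ by simp [dist_eq_norm]]
              exact le_trans hw (hδle i hi)
            · exact Metric.mem_closedBall.1 hz
    have hconstV : ∀ i : ℚ_[p], ∀ z ∈ Metric.closedBall i ((p:ℝ)^(-(k i:ℤ))), f z = f i :=
      fun i z hz => hUconst i z (hk i hz)
    intro x u hu
    by_cases h1 : ∃ i ∈ t, x ∈ Metric.closedBall i ((p:ℝ)^(-(k i:ℤ)))
    · obtain ⟨i, hi, hxi⟩ := h1
      rw [hconstV i _ (hstep i hi x hxi u hu), hconstV i _ hxi]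
    · by_cases h2 : ∃ i ∈ t, x + u ∈ Metric.closedBall i ((p:ℝ)^(-(k i:ℤ)))
      · obtain ⟨i, hi, hxi⟩ := h2
        have hx : x ∈ Metric.closedBall i ((p:ℝ)^(-(k i:ℤ))) := by
          have := hstep i hi (x + u) hxi (-u) (by simpa using hu)
          simpa using this
        rw [hconstV i _ hxi, hconstV i _ hx]
      · have hx1 : x ∉ tsupport f := by
          intro hc
          obtain ⟨i, hi⟩ := Set.mem_iUnion₂.1 (ht hc)
          exact h1 ⟨i, hi.1, hi.2⟩
        have hx2 : x + u ∉ tsupport f := by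
          intro hc
          obtain ⟨i, hi⟩ := Set.mem_iUnion₂.1 (ht hc)
          exact h2 ⟨i, hi.1, hi.2⟩
        rw [image_eq_zero_of_notMem_tsupport hx1, image_eq_zero_of_notMem_tsupport hx2]
  · -- support bound
    refine le_trans hr ?_
    intro z hz
    rw [mem_pb]
    have h1 : ‖z‖ ≤ r := by simpa [dist_eq_norm] using Metric.mem_closedBall.1 hz
    calc ‖z‖ ≤ r := h1
      _ ≤ (p:ℝ)^(m:ℕ) := le_of_lt hm
      _ ≤ (p:ℝ)^((N:ℕ):ℤ) := by
          rw [← zpow_natCast]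
          apply zpow_le_zpow_right₀ (le_of_lt one_lt_P)
          have : m ≤ N := le_sup_right
          omega
end St14

open St14 in
/-- Fourier inversion on `ℚ_p`: for `μ` the Haar measure with `μ(ℤ_p) = 1`,
`ψ` an additive character trivial on `ℤ_p` and nontrivial on `p⁻¹ℤ_p`, and `f` locally constant
with compact support, the Fourier transform `f̂(y) = ∫ f(x) ψ(-xy) dμ(x)` is again locally
constant with compact support, and `f(x) = ∫ f̂(y) ψ(xy) dμ(y)` for all `x`. -/
theorem statement14 (μ : Measure ℚ_[p]) [μ.IsAddHaarMeasure]
    (hμ : μ {x : ℚ_[p] | ‖x‖ ≤ 1} = 1)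
    (ψ : AddChar ℚ_[p] ℂ)
    (hψtriv : ∀ x : ℚ_[p], ‖x‖ ≤ 1 → ψ x = 1)
    (hψnontriv : ∃ x : ℚ_[p], ‖x‖ ≤ (p : ℝ) ∧ ψ x ≠ 1)
    (f : ℚ_[p] → ℂ) (hf1 : IsLocallyConstant f) (hf2 : HasCompactSupport f)
    (fhat : ℚ_[p] → ℂ) (hfhat : ∀ y, fhat y = ∫ x, f x * ψ (-(x * y)) ∂μ) :
    IsLocallyConstant fhat ∧ HasCompactSupport fhat ∧
      ∀ x, f x = ∫ y, fhat y * ψ (x * y) ∂μ := by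
  classical
  obtain ⟨N, hconst, hsupp⟩ := unif hf1 hf2
  set δ : ℝ := (p:ℝ)^(-(N:ℤ)) with hδdef
  have hδpos : 0 < δ := zpow_pos P_pos _
  set S : Set ℚ_[p] := pb p (N:ℤ) with hSdef
  have hψc : Continuous ψ := psi_cont ψ hψtriv
  have hfc : Continuous f := hf1.continuous
  -- vanishing of fhat off S
  have hvanish : ∀ y : ℚ_[p], y ∉ S → fhat y = 0 := by
    intro y hy
    obtain ⟨u, hu, hune⟩ := exists_u ψ hψtriv hψnontriv (n := (N:ℤ)) hy
    have htrans : ∫ x, f (x + u) * ψ (-((x + u) * y)) ∂μ = ∫ x, f x * ψ (-(x * y)) ∂μ :=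
      integral_add_right_eq_self (fun x => f x * ψ (-(x * y))) u
    have hpt : ∀ x : ℚ_[p], f (x + u) * ψ (-((x + u) * y))
        = ψ (-(u * y)) * (f x * ψ (-(x * y))) := by
      intro x
      rw [hconst x u hu, show -((x + u) * y) = -(u * y) + -(x * y) by ring,
        AddChar.map_add_eq_mul]
      ring
    have heq : ψ (-(u * y)) * fhat y = fhat y := by
      conv_rhs => rw [hfhat]
      rw [← htrans]
      simp_rw [hpt]
      rw [integral_const_mul, ← hfhat]
    have h0 : ((1:ℂ) - ψ (-(u * y))) * fhat y = 0 := by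
      rw [sub_mul, one_mul, heq, sub_self]
    rcases mul_eq_zero.1 h0 with hc | hc
    · exfalso
      apply hune
      have h1 : (ψ (-(u * y)) : ℂ) = 1 := by
        have := sub_eq_zero.1 hc; exact this.symm
      have h2 := AddChar.map_add_eq_mul ψ (u * y) (-(u * y))
      rw [add_neg_cancel, AddChar.map_zero_eq_one, h1, mul_one] at h2
      exact h2.symm
    · exact hc
  have hcs : HasCompactSupport fhat := HasCompactSupport.intro (pb_isCompact _) hvanish
  -- local constancy of fhat
  have hlc' : ∀ y v : ℚ_[p], ‖v‖ ≤ δ → fhat (y + v) = fhat y := by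
    intro y v hv
    rw [hfhat, hfhat]
    apply integral_congr_ae
    apply Filter.Eventually.of_forall
    intro a
    dsimp only
    by_cases ha : f a = 0
    · simp [ha]
    · have haS : a ∈ S := hsupp (subset_tsupport f (by simpa [Function.mem_support] using ha))
      have h1 : ψ (-(a * v)) = 1 := by
        apply hψtriv
        rw [norm_neg, norm_mul]
        calc ‖a‖ * ‖v‖ ≤ (p:ℝ)^(N:ℤ) * δ :=
              mul_le_mul haS hv (norm_nonneg _) (le_of_lt (zpow_pos P_pos _))
          _ = 1 := by rw [hδdef, ← zpow_add₀ (ne_of_gt (P_pos (p := p)))]; simp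
      rw [show -(a * (y + v)) = -(a * y) + -(a * v) by ring, AddChar.map_add_eq_mul, h1, mul_one]
  have hlc : IsLocallyConstant fhat := by
    rw [IsLocallyConstant.iff_exists_open]
    intro y
    refine ⟨Metric.closedBall y δ, IsUltrametricDist.isOpen_closedBall _ (ne_of_gt hδpos),
      Metric.mem_closedBall_self (le_of_lt hδpos), ?_⟩
    intro y' hy'
    have h2 : y' = y + (y' - y) := by ring
    rw [h2, hlc' y (y' - y) (by simpa [dist_eq_norm] using Metric.mem_closedBall.1 hy')]
  refine ⟨hlc, hcs, ?_⟩
  -- Fourier inversion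
  intro x
  have hSmeas : MeasurableSet S := pb_measurable _
  -- the kernel on the product space
  set H : ℚ_[p] × ℚ_[p] → ℂ :=
    fun z => S.indicator (fun _ => (1:ℂ)) z.1 * (f z.2 * ψ ((x - z.2) * z.1)) with hHdef
  have hSind : Continuous (S.indicator (fun _ => (1:ℂ))) := by
    apply IsLocallyConstant.continuous
    rw [IsLocallyConstant.iff_exists_open]
    intro a
    by_cases ha : a ∈ S
    · exact ⟨S, pb_isOpen _, ha, fun b hb => by
        rw [Set.indicator_of_mem hb, Set.indicator_of_mem ha]⟩
    · exact ⟨Sᶜ, (pb_isClosed _).isOpen_compl, ha, fun b hb => by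
        rw [Set.indicator_of_notMem hb, Set.indicator_of_notMem ha]⟩
  have hHcont : Continuous H := by
    apply (hSind.comp continuous_fst).mul
    exact (hfc.comp continuous_snd).mul
      (hψc.comp ((continuous_const.sub continuous_snd).mul continuous_fst))
  have hHsupp : HasCompactSupport H := by
    apply HasCompactSupport.intro ((pb_isCompact (N:ℤ)).prod hf2)
    intro z hz
    by_cases h1 : z.1 ∈ S
    · have h2 : z.2 ∉ tsupport f := fun hc => hz (Set.mem_prod.2 ⟨h1, hc⟩)
      rw [hHdef]
      simp [image_eq_zero_of_notMem_tsupport h2]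
    · rw [hHdef]
      simp [Set.indicator_of_notMem h1]
  have hHint : Integrable H (μ.prod μ) := hHcont.integrable_of_hasCompactSupport hHsupp
  have hswap : ∫ a, ∫ b, H (a, b) ∂μ ∂μ = ∫ b, ∫ a, H (a, b) ∂μ ∂μ :=
    integral_integral_swap (f := fun a b => H (a, b)) hHint
  -- LHS of hswap equals the integral we want
  have hL : ∫ y, fhat y * ψ (x * y) ∂μ = ∫ a, ∫ b, H (a, b) ∂μ ∂μ := by
    rw [← setIntegral_eq_integral_of_forall_compl_eq_zero
      (fun y hy => by rw [hvanish y hy, zero_mul]), ← integral_indicator hSmeas]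
    apply integral_congr_ae
    apply Filter.Eventually.of_forall
    intro a
    have hinner : ∫ b, f b * ψ ((x - b) * a) ∂μ = fhat a * ψ (x * a) := by
      have hpt : ∀ b : ℚ_[p], f b * ψ ((x - b) * a) = f b * ψ (-(b * a)) * ψ (x * a) := by
        intro b
        rw [show (x - b) * a = -(b * a) + x * a by ring, AddChar.map_add_eq_mul]
        ring
      simp_rw [hpt]
      rw [integral_mul_const, ← hfhat]
    by_cases ha : a ∈ S
    · rw [Set.indicator_of_mem ha]
      rw [hHdef]
      simp only
      rw [integral_const_mul, Set.indicator_of_mem ha, hinner, one_mul]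
    · rw [Set.indicator_of_notMem ha]
      rw [hHdef]
      simp only
      rw [integral_const_mul, Set.indicator_of_notMem ha, zero_mul]
  -- RHS of hswap equals f x
  have hT'eq : ∀ b : ℚ_[p], (‖x - b‖ ≤ δ) ↔ b ∈ (fun b => -x + b) ⁻¹' pb p (-(N:ℤ)) := by
    intro b
    rw [Set.mem_preimage, mem_pb, show -x + b = -(x - b) by ring, norm_neg]
  have hR : ∫ b, ∫ a, H (a, b) ∂μ ∂μ = f x := by
    have hinner : ∀ b : ℚ_[p], ∫ a, H (a, b) ∂μ
        = f b * (if ‖x - b‖ ≤ δ then ((((p:ℝ)^(N:ℤ) : ℝ)) : ℂ) else 0) := by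
      intro b
      rw [hHdef]
      simp only
      have hpt : ∀ a : ℚ_[p], S.indicator (fun _ => (1:ℂ)) a * (f b * ψ ((x - b) * a))
          = S.indicator (fun a => f b * ψ (a * (x - b))) a := by
        intro a
        by_cases ha : a ∈ S
        · rw [Set.indicator_of_mem ha, Set.indicator_of_mem ha, one_mul, mul_comm a]
        · rw [Set.indicator_of_notMem ha, Set.indicator_of_notMem ha, zero_mul]
      simp_rw [hpt]
      rw [integral_indicator hSmeas, integral_const_mul,
        int_ball μ hμ ψ hψtriv hψnontriv (N:ℤ) (x - b)]
    simp_rw [hinner]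
    have hfun : (fun b => f b * (if ‖x - b‖ ≤ δ then ((((p:ℝ)^(N:ℤ) : ℝ)) : ℂ) else 0))
        = ((fun b => -x + b) ⁻¹' pb p (-(N:ℤ))).indicator
            (fun _ => f x * ((((p:ℝ)^(N:ℤ) : ℝ)) : ℂ)) := by
      funext b
      by_cases hb : ‖x - b‖ ≤ δ
      · rw [if_pos hb, Set.indicator_of_mem ((hT'eq b).1 hb)]
        have hfb : f b = f x := by
          have h1 : ‖b - x‖ ≤ δ := by rwa [norm_sub_rev] at hb
          have := hconst x (b - x) h1
          rwa [show x + (b - x) = b by ring] at this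
        rw [hfb]
      · rw [if_neg hb, Set.indicator_of_notMem (fun hc => hb ((hT'eq b).2 hc)), mul_zero]
    rw [hfun, integral_indicator]
    · rw [setIntegral_const, measureReal_def, measure_preimage_add, meas_pb μ hμ, toReal_zpow']
      rw [ENNReal.toReal_natCast, Complex.real_smul]
      rw [show ((((p:ℝ)^(-(N:ℤ)) : ℝ)) : ℂ) * (f x * ((((p:ℝ)^(N:ℤ) : ℝ)) : ℂ))
          = ((((p:ℝ)^(-(N:ℤ)) * ((p:ℝ)^(N:ℤ)) : ℝ)) : ℂ) * f x by push_cast; ring]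
      rw [← zpow_add₀ (ne_of_gt (P_pos (p := p)))]
      simp
    · exact (pb_measurable _).preimage (measurable_const_add _)
  rw [hL, hswap, hR]
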